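/- Let (X, Y, I, J) be an ADHM datum with framing rank 1 (W = ℂ) which is a fixed point of the one-parameter torus a·(X,Y,I,J) = (aX, a⁻¹Y, I, J), so that V = ⊕_{i=0}^{M−1} ℂ·e_i with e_i of weight i, X e_i = λ_i e_{i−1}, Y e_i = μ_i e_{i+1}, and I, J connect W to ℂ·e₀ only. Assume stability ℂ⟨X,Y⟩ Im(I) = V, which forces μ_i ≠ 0 for 0 ≤ i ≤ M−2, and the equation [X,Y] + IJ = 0. Then λ_i = 0 for all i. -/
import Mathlib


/-- for a torus-fixed ADHM datum with framing rank 1, with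
`X e_i = λ_i e_{i-1}`, `Y e_i = μ_i e_{i+1}`, stability forcing `μ_i ≠ 0` for
`i ≤ M - 2`, the relation `λ_i μ_{i-1} = λ_{i+1} μ_i` for `1 ≤ i ≤ M - 1`
(coming from `[X,Y] + IJ = 0`), and `λ_M = 0`, all the `λ_i` vanish. -/
theorem stmt4 (M : ℕ) (lam mu : ℕ → ℂ)
    (hmu : ∀ i, i + 2 ≤ M → mu i ≠ 0)
    (hrel : ∀ i, 1 ≤ i → i ≤ M - 1 → lam i * mu (i - 1) = lam (i + 1) * mu i)
    (hlamM : lam M = 0) :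
    ∀ i, 1 ≤ i → i ≤ M → lam i = 0 := by
  have key : ∀ d i, 1 ≤ i → i ≤ M → M - i ≤ d → lam i = 0 := by
    intro d
    induction d with
    | zero =>
      intro i h1 h2 h3
      have : i = M := by omega
      simpa [this] using hlamM
    | succ d ih =>
      intro i h1 h2 h3
      rcases eq_or_lt_of_le h2 with h | h
      · simpa [h] using hlamM
      · have hle : i ≤ M - 1 := by omega
        have hr := hrel i h1 hle
        have hnext : lam (i + 1) = 0 := ih (i + 1) (by omega) (by omega) (by omega)
        have hmune : mu (i - 1) ≠ 0 := hmu (i - 1) (by omega)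
        have : lam i * mu (i - 1) = 0 := by rw [hr, hnext, zero_mul]
        exact (mul_eq_zero.mp this).resolve_right hmune
  intro i h1 h2
  exact key (M - i) i h1 h2 le_rfl
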